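/- Let h be strictly convex and differentiable on (0,∞), so that h' is strictly increasing and invertible with inverse g. Then a positive distribution P is the unique conditional minimizer of H_h(P‖P*) under the moment constraints ∑_j m_{rj} p_j = M_r if and only if p_j = p*_j g(∑_{r=0}^k λ_r m_{rj}) for some multipliers λ_r satisfying the moment equations. -/

import Mathlib

open Finset

lemma maxent_grad_lt {h : ℝ → ℝ} (hconv : StrictConvexOn ℝ (Set.Ioi 0) h)
    (hdiff : ∀ x ∈ Set.Ioi (0:ℝ), DifferentiableAt ℝ h x)
    {a b : ℝ} (ha : 0 < a) (hb : 0 < b) (hab : a ≠ b) :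
    h a + deriv h a * (b - a) < h b := by
  rcases lt_or_gt_of_ne hab with hlt | hlt
  · have := hconv.deriv_lt_slope ha hb hlt (hdiff a ha)
    rw [slope_def_field] at this
    have h2 := (lt_div_iff₀ (by linarith : (0:ℝ) < b - a)).1 this
    linarith
  · have := hconv.slope_lt_deriv hb ha hlt (hdiff a ha)
    rw [slope_def_field] at this
    have h2 := (div_lt_iff₀ (by linarith : (0:ℝ) < a - b)).1 this
    nlinarith

/-- linear functional `v ↦ ∑ j, c j * v j` -/
def dotL (n : ℕ) (c : Fin n → ℝ) : (Fin n → ℝ) →ₗ[ℝ] ℝ where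
  toFun v := ∑ j, c j * v j
  map_add' v w := by simp [mul_add, Finset.sum_add_distrib]
  map_smul' t v := by simp [Finset.mul_sum]; ring_nf; simp [mul_comm, mul_left_comm]

lemma dotL_single (n : ℕ) (c : Fin n → ℝ) (j : Fin n) : dotL n c (Pi.single j 1) = c j := by
  simp [dotL, Pi.single_apply, mul_ite, Finset.sum_ite_eq']

/-- With `g = (h')⁻¹` (inverse of the strictly increasing
derivative of a strictly convex `h`), a positive distribution `P` is the unique
conditional minimizer of `H_h(P‖P*)` under the moment constraints iff
`p_j = p*_j g(∑_r λ_r m_{rj})` for multipliers `λ_r` satisfying the moment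
equations. -/
theorem maxent_solution_parametrization
    (n k : ℕ) (hkn : k + 1 < n)
    (h g : ℝ → ℝ)
    (hconv : StrictConvexOn ℝ (Set.Ioi 0) h)
    (hdiff : ∀ x ∈ Set.Ioi (0 : ℝ), DifferentiableAt ℝ h x)
    (hg : ∀ x ∈ Set.Ioi (0 : ℝ), g (deriv h x) = x)
    (hg' : ∀ y, deriv h (g y) = y ∧ g y ∈ Set.Ioi (0 : ℝ))
    (ps : Fin n → ℝ) (hps : ∀ i, 0 < ps i) (hps1 : ∑ i, ps i = 1)
    (m : Fin (k + 1) → Fin n → ℝ) (M : Fin (k + 1) → ℝ)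
    (hm0 : ∀ j, m 0 j = 1) (hM0 : M 0 = 1)
    (hrank : LinearIndependent ℝ m)
    (p : Fin n → ℝ) (hp : ∀ i, 0 < p i) :
    ((∀ r, ∑ j, m r j * p j = M r) ∧
      ∀ x : Fin n → ℝ, (∀ i, 0 < x i) → (∀ r, ∑ j, m r j * x j = M r) → x ≠ p →
        ∑ i, ps i * h (p i / ps i) < ∑ i, ps i * h (x i / ps i))
    ↔ ∃ lam : Fin (k + 1) → ℝ,
        (∀ j, p j = ps j * g (∑ r, lam r * m r j)) ∧
        ∀ r, ∑ j, m r j * (ps j * g (∑ r', lam r' * m r' j)) = M r := by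
  have hn : 0 < n := lt_trans (Nat.succ_pos k) hkn
  have : NeZero n := ⟨hn.ne'⟩
  constructor
  · rintro ⟨hfeas, hmin⟩
    set c : Fin n → ℝ := fun j => deriv h (p j / ps j) with hc
    -- key: c is orthogonal to the kernel of the constraints
    have key : ∀ v : Fin n → ℝ, (∀ r, ∑ j, m r j * v j = 0) → ∑ j, c j * v j = 0 := by
      intro v hv
      by_cases hv0 : v = 0
      · simp [hv0]
      set φ : ℝ → ℝ := fun t => ∑ j, ps j * h ((p j + t * v j) / ps j) with hφ
      have hder : HasDerivAt φ (∑ j, c j * v j) 0 := by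
        have hterm : ∀ j : Fin n, HasDerivAt (fun t => ps j * h ((p j + t * v j) / ps j))
            (c j * v j) 0 := by
          intro j
          have hinner : HasDerivAt (fun t : ℝ => (p j + t * v j) / ps j) (v j / ps j) 0 := by
            have := (((hasDerivAt_id (0:ℝ)).mul_const (v j)).const_add (p j)).div_const (ps j)
            simpa using this
          have hpos : (p j + 0 * v j) / ps j ∈ Set.Ioi (0:ℝ) := by
            simp only [zero_mul, add_zero, Set.mem_Ioi]
            exact div_pos (hp j) (hps j)
          have hcomp := ((hdiff _ hpos).hasDerivAt.comp 0 hinner).const_mul (ps j)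
          have heq : (p j + 0 * v j) / ps j = p j / ps j := by ring_nf
          rw [heq] at hcomp
          refine hcomp.congr_deriv (Eq.symm ?_)
          simp only [hc]
          rw [show ps j * (deriv h (p j / ps j) * (v j / ps j))
              = (ps j / ps j) * (deriv h (p j / ps j) * v j) by ring,
            div_self (hps j).ne', one_mul]
        exact (HasDerivAt.fun_sum (fun j _ => hterm j))
      have hlocal : IsLocalMin φ 0 := by
        obtain ⟨j0, hj0⟩ := Function.ne_iff.1 hv0
        have hδpos : 0 < Finset.univ.inf' (univ_nonempty) (fun j => p j / (|v j| + 1)) := by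
          apply (Finset.lt_inf'_iff _).2
          intro j _
          exact div_pos (hp j) (by positivity)
        filter_upwards [eventually_abs_sub_lt 0 hδpos] with t ht
        rcases eq_or_ne t 0 with rfl | ht0
        · exact le_refl _
        simp only [sub_zero] at ht
        set x : Fin n → ℝ := fun j => p j + t * v j with hx
        have hxpos : ∀ j, 0 < x j := by
          intro j
          have h1 : |t| < p j / (|v j| + 1) :=
            lt_of_lt_of_le ht (Finset.inf'_le _ (mem_univ j))
          have h2 : |t| * (|v j| + 1) < p j := by
            rw [← lt_div_iff₀ (by positivity)]; exact h1
          have h3 : |t * v j| < p j := by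
            rw [abs_mul]; nlinarith [abs_nonneg t, abs_nonneg (v j)]
          have := neg_abs_le (t * v j)
          simp only [hx]; linarith [(abs_lt.1 h3).1]
        have hxfeas : ∀ r, ∑ j, m r j * x j = M r := by
          intro r
          have : ∑ j, m r j * x j = ∑ j, m r j * p j + t * ∑ j, m r j * v j := by
            rw [Finset.mul_sum, ← Finset.sum_add_distrib]
            exact Finset.sum_congr rfl (fun j _ => by simp only [hx]; ring)
          rw [this, hv r, hfeas r, mul_zero, add_zero]
        have hxne : x ≠ p := by
          intro hcon
          have := congrFun hcon j0
          simp only [hx] at this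
          have : t * v j0 = 0 := by linarith
          rcases mul_eq_zero.1 this with h' | h'
          · exact ht0 h'
          · exact hj0 h'
        have := hmin x hxpos hxfeas hxne
        have hφ0 : φ 0 = ∑ i, ps i * h (p i / ps i) := by
          simp [hφ]
        rw [hφ0]
        exact le_of_lt this
      have := hlocal.deriv_eq_zero
      rw [hder.deriv] at this
      exact this
    -- linear algebra: c ∈ span of the rows of m
    have hspan : dotL n c ∈ Submodule.span ℝ (Set.range (fun r => dotL n (m r))) := by
      apply mem_span_of_iInf_ker_le_ker
      intro v hv
      simp only [Submodule.mem_iInf, LinearMap.mem_ker] at hv ⊢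
      exact key v (fun r => hv r)
    obtain ⟨lam, hlam⟩ := (Submodule.mem_span_range_iff_exists_fun ℝ).1 hspan
    have hcj : ∀ j, ∑ r, lam r * m r j = c j := by
      intro j
      have h1 := congrArg (fun L : (Fin n → ℝ) →ₗ[ℝ] ℝ => L (Pi.single j 1)) hlam
      simpa [LinearMap.sum_apply, LinearMap.smul_apply, dotL_single] using h1
    have hpj : ∀ j, p j = ps j * g (∑ r, lam r * m r j) := by
      intro j
      rw [hcj j]
      simp only [hc]
      rw [hg _ (Set.mem_Ioi.2 (div_pos (hp j) (hps j))), mul_comm,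
        div_mul_cancel₀ _ (hps j).ne']
    refine ⟨lam, hpj, fun r => ?_⟩
    rw [← hfeas r]
    exact Finset.sum_congr rfl (fun j _ => by rw [← hpj j])
  · rintro ⟨lam, hpeq, hmom⟩
    have hS : ∀ j, deriv h (p j / ps j) = ∑ r, lam r * m r j := by
      intro j
      rw [hpeq j, mul_div_assoc, mul_comm, div_mul_cancel₀ _ (hps j).ne']
      exact (hg' _).1
    have hfeas : ∀ r, ∑ j, m r j * p j = M r := by
      intro r
      rw [← hmom r]
      exact Finset.sum_congr rfl (fun j _ => by rw [hpeq j])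
    refine ⟨hfeas, ?_⟩
    intro x hx hxfeas hxne
    obtain ⟨j0, hj0⟩ := Function.ne_iff.1 hxne
    have hkey : ∀ j : Fin n, ps j * h (p j / ps j) + (∑ r, lam r * m r j) * (x j - p j)
        ≤ ps j * h (x j / ps j) := by
      intro j
      rcases eq_or_ne (x j) (p j) with heq | hne
      · rw [heq]; ring_nf; exact le_refl _
      · have hab : p j / ps j ≠ x j / ps j := by
          intro hcon
          field_simp [(hps j).ne'] at hcon
          exact hne hcon.symm
        have := maxent_grad_lt hconv hdiff (div_pos (hp j) (hps j)) (div_pos (hx j) (hps j)) hab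
        rw [hS j, div_sub_div_same] at this
        have h2 := (mul_lt_mul_iff_right₀ (hps j)).2 this
        have h3 : ps j * (h (p j / ps j) + (∑ r, lam r * m r j) * ((x j - p j) / ps j))
            = ps j * h (p j / ps j) + (∑ r, lam r * m r j) * (x j - p j) := by
          rw [mul_add]
          congr 1
          rw [mul_comm, mul_assoc, div_mul_cancel₀ _ (hps j).ne']
        linarith
    have hstrict : ps j0 * h (p j0 / ps j0) + (∑ r, lam r * m r j0) * (x j0 - p j0)
        < ps j0 * h (x j0 / ps j0) := by
      have hab : p j0 / ps j0 ≠ x j0 / ps j0 := by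
        intro hcon
        field_simp [(hps j0).ne'] at hcon
        exact hj0 hcon.symm
      have := maxent_grad_lt hconv hdiff (div_pos (hp j0) (hps j0)) (div_pos (hx j0) (hps j0)) hab
      rw [hS j0, div_sub_div_same] at this
      have h2 := (mul_lt_mul_iff_right₀ (hps j0)).2 this
      have h3 : ps j0 * (h (p j0 / ps j0) + (∑ r, lam r * m r j0) * ((x j0 - p j0) / ps j0))
          = ps j0 * h (p j0 / ps j0) + (∑ r, lam r * m r j0) * (x j0 - p j0) := by
        rw [mul_add]
        congr 1
        rw [mul_comm, mul_assoc, div_mul_cancel₀ _ (hps j0).ne']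
      linarith
    have hsum : ∑ j, (ps j * h (p j / ps j) + (∑ r, lam r * m r j) * (x j - p j))
        < ∑ j, ps j * h (x j / ps j) :=
      Finset.sum_lt_sum (fun j _ => hkey j) ⟨j0, mem_univ j0, hstrict⟩
    have hzero : ∑ j, (∑ r, lam r * m r j) * (x j - p j) = 0 := by
      have : ∑ j, (∑ r, lam r * m r j) * (x j - p j)
          = ∑ r, lam r * ((∑ j, m r j * x j) - ∑ j, m r j * p j) := by
        simp_rw [Finset.sum_mul]
        rw [Finset.sum_comm]
        refine Finset.sum_congr rfl (fun r _ => ?_)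
        have : ∑ j, lam r * m r j * (x j - p j)
            = lam r * ∑ j, (m r j * x j - m r j * p j) := by
          rw [Finset.mul_sum]
          exact Finset.sum_congr rfl (fun j _ => by ring)
        rw [this, Finset.sum_sub_distrib, mul_sub]
      rw [this]
      apply Finset.sum_eq_zero
      intro r _
      rw [hxfeas r, hfeas r, sub_self, mul_zero]
    rw [Finset.sum_add_distrib, hzero, add_zero] at hsum
    exact hsum
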